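/- arXiv:2208.07808 — 3 statements merged into one kernel-verified Lean document; each statement's English description precedes it below -/
import Mathlib

section
/- Let (A, E, s) be an extriangulated category. Then the following are equivalent: (i) the underlying additive category A is weakly idempotent complete (every retraction admits a kernel); (ii) every retraction in A is a deflation of (A, E, s); (iii) every section in A is an inflation of (A, E, s); (iv) (A, E, s) satisfies the condition (WIC): for all composable morphisms f, g in A, if gf is an inflation then f is an inflation, and if gf is a deflation then g is a deflation. -/
/-!
Common axiomatic framework: extriangulated categories in the sense of Nakaoka–Palu,
formalised as a biadditive functor `E` together with a realisation predicate
`IsExtriangle` subject to the axioms (ET1)–(ET4), (ET3)ᵒᵖ, (ET4)ᵒᵖ.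
-/

open CategoryTheory CategoryTheory.Limits ZeroObject

attribute [local instance] CategoryTheory.Limits.hasBinaryBiproducts_of_finite_biproducts

universe v u

namespace ExtriPaper

/-- The data underlying an extriangulated category: a biadditive functor `E` and,
for each extension `δ ∈ E(X, A)`, the predicate picking out the pairs of composable
morphisms `A ⟶ B ⟶ X` belonging to the equivalence class `s(δ)`. -/
structure PreExt (C : Type u) [Category.{v} C] [Preadditive C] where
  E : Cᵒᵖ ⥤ C ⥤ AddCommGrpCat.{v}
  IsExtriangle : ∀ {A B X : C}, (A ⟶ B) → (B ⟶ X) → ↥((E.obj (Opposite.op X)).obj A) → Prop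

namespace PreExt

variable {C : Type u} [Category.{v} C] [Preadditive C]
variable (S : PreExt C)

/-- The group `E(X, A)` of extensions of `X` by `A`. -/
abbrev Ext (X A : C) : Type v := ↥((S.E.obj (Opposite.op X)).obj A)

/-- Pushforward `a_* δ` of an extension along `a : A ⟶ A'`. -/
def push {X A A' : C} (a : A ⟶ A') (δ : S.Ext X A) : S.Ext X A' :=
  (S.E.obj (Opposite.op X)).map a δ

/-- Pullback `c^* δ` of an extension along `c : X' ⟶ X`. -/
def pull {X' X A : C} (c : X' ⟶ X) (δ : S.Ext X A) : S.Ext X' A :=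
  (S.E.map c.op).app A δ

section Axioms

variable [HasZeroObject C] [HasFiniteBiproducts C]

/-- The direct sum `δ ⊕ δ'` of two extensions. -/
noncomputable def sumExt {X X' A A' : C} (δ : S.Ext X A) (δ' : S.Ext X' A') :
    S.Ext (X ⊞ X') (A ⊞ A') :=
  S.push biprod.inl (S.pull biprod.fst δ) + S.push biprod.inr (S.pull biprod.snd δ')

/-- The axioms of an extriangulated category (Nakaoka–Palu): `E` is biadditive,
`s` (encoded by `IsExtriangle`) is an additive realisation defined on equivalence
classes, and the axioms (ET3), (ET3)ᵒᵖ, (ET4), (ET4)ᵒᵖ hold. -/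
structure IsET : Prop where
  /-- Biadditivity of `E` in the covariant variable. -/
  push_add : ∀ {X A A' : C} (a b : A ⟶ A') (δ : S.Ext X A),
      S.push (a + b) δ = S.push a δ + S.push b δ
  /-- Biadditivity of `E` in the contravariant variable. -/
  pull_add : ∀ {X X' A : C} (c d : X' ⟶ X) (δ : S.Ext X A),
      S.pull (c + d) δ = S.pull c δ + S.pull d δ
  /-- Every extension is realised by a pair of composable morphisms. -/
  realize_exists : ∀ {A X : C} (δ : S.Ext X A),
      ∃ (B : C) (f : A ⟶ B) (g : B ⟶ X), S.IsExtriangle f g δ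
  /-- The realisation is closed under equivalence of pairs of composable morphisms. -/
  realize_iso : ∀ {A B B' X : C} {f : A ⟶ B} {g : B ⟶ X} {δ : S.Ext X A} (e : B ≅ B'),
      S.IsExtriangle f g δ → S.IsExtriangle (f ≫ e.hom) (e.inv ≫ g) δ
  /-- Any two realisations of the same extension are equivalent. -/
  realize_unique : ∀ {A B B' X : C} {f : A ⟶ B} {g : B ⟶ X} {f' : A ⟶ B'} {g' : B' ⟶ X}
      {δ : S.Ext X A}, S.IsExtriangle f g δ → S.IsExtriangle f' g' δ →
      ∃ e : B ≅ B', f ≫ e.hom = f' ∧ e.hom ≫ g' = g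
  /-- Morphisms of extensions lift to morphisms of extriangles. -/
  realize_map : ∀ {A B X A' B' X' : C} {f : A ⟶ B} {g : B ⟶ X} {δ : S.Ext X A}
      {f' : A' ⟶ B'} {g' : B' ⟶ X'} {δ' : S.Ext X' A'},
      S.IsExtriangle f g δ → S.IsExtriangle f' g' δ' →
      ∀ (a : A ⟶ A') (c : X ⟶ X'), S.push a δ = S.pull c δ' →
      ∃ b : B ⟶ B', f ≫ b = a ≫ f' ∧ b ≫ g' = g ≫ c
  /-- The zero extension is realised by the split pair. -/
  realize_zero : ∀ (A X : C),
      S.IsExtriangle (biprod.inl : A ⟶ A ⊞ X) (biprod.snd : A ⊞ X ⟶ X) (0 : S.Ext X A)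
  /-- The realisation is additive. -/
  realize_sum : ∀ {A B X A' B' X' : C} {f : A ⟶ B} {g : B ⟶ X} {δ : S.Ext X A}
      {f' : A' ⟶ B'} {g' : B' ⟶ X'} {δ' : S.Ext X' A'},
      S.IsExtriangle f g δ → S.IsExtriangle f' g' δ' →
      S.IsExtriangle (biprod.map f f') (biprod.map g g') (S.sumExt δ δ')
  /-- Axiom (ET3). -/
  et3 : ∀ {A B X A' B' X' : C} {f : A ⟶ B} {g : B ⟶ X} {δ : S.Ext X A}
      {f' : A' ⟶ B'} {g' : B' ⟶ X'} {δ' : S.Ext X' A'},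
      S.IsExtriangle f g δ → S.IsExtriangle f' g' δ' →
      ∀ (a : A ⟶ A') (b : B ⟶ B'), f ≫ b = a ≫ f' →
      ∃ c : X ⟶ X', g ≫ c = b ≫ g' ∧ S.push a δ = S.pull c δ'
  /-- Axiom (ET3)ᵒᵖ. -/
  et3op : ∀ {A B X A' B' X' : C} {f : A ⟶ B} {g : B ⟶ X} {δ : S.Ext X A}
      {f' : A' ⟶ B'} {g' : B' ⟶ X'} {δ' : S.Ext X' A'},
      S.IsExtriangle f g δ → S.IsExtriangle f' g' δ' →
      ∀ (b : B ⟶ B') (c : X ⟶ X'), g ≫ c = b ≫ g' →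
      ∃ a : A ⟶ A', f ≫ b = a ≫ f' ∧ S.push a δ = S.pull c δ'
  /-- Axiom (ET4). -/
  et4 : ∀ {A B D F G : C} {f : A ⟶ B} {f' : B ⟶ D} {δ : S.Ext D A}
      {g : B ⟶ G} {g' : G ⟶ F} {δ' : S.Ext F B},
      S.IsExtriangle f f' δ → S.IsExtriangle g g' δ' →
      ∃ (E₀ : C) (h : G ⟶ E₀) (d : D ⟶ E₀) (e : E₀ ⟶ F) (δ'' : S.Ext E₀ A),
        S.IsExtriangle (f ≫ g) h δ'' ∧
        S.IsExtriangle d e (S.push f' δ') ∧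
        S.pull d δ'' = δ ∧
        S.push f δ'' = S.pull e δ' ∧
        f' ≫ d = g ≫ h ∧ h ≫ e = g'
  /-- Axiom (ET4)ᵒᵖ. -/
  et4op : ∀ {D B A F G : C} {p : D ⟶ B} {f₁ : B ⟶ A} {δ₁ : S.Ext A D}
      {q : F ⟶ G} {g₁ : G ⟶ B} {δ₁' : S.Ext B F},
      S.IsExtriangle p f₁ δ₁ → S.IsExtriangle q g₁ δ₁' →
      ∃ (E₀ : C) (h : E₀ ⟶ G) (d : E₀ ⟶ D) (e : F ⟶ E₀) (δ'' : S.Ext A E₀),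
        S.IsExtriangle h (g₁ ≫ f₁) δ'' ∧
        S.IsExtriangle e d (S.pull p δ₁') ∧
        S.push d δ'' = δ₁ ∧
        S.pull f₁ δ'' = S.push e δ₁' ∧
        d ≫ p = h ≫ g₁ ∧ e ≫ h = q

end Axioms

/-- A morphism is an inflation if it occurs as the first morphism of an extriangle. -/
def IsInflation {A B : C} (f : A ⟶ B) : Prop :=
  ∃ (X : C) (g : B ⟶ X) (δ : S.Ext X A), S.IsExtriangle f g δ

/-- A morphism is a deflation if it occurs as the second morphism of an extriangle. -/
def IsDeflation {B X : C} (g : B ⟶ X) : Prop :=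
  ∃ (A : C) (f : A ⟶ B) (δ : S.Ext X A), S.IsExtriangle f g δ

/-- An isomorphism of extriangles: a triple of isomorphisms compatible with the
structure morphisms and identifying the two extensions. -/
def TriIso {A B X A' B' X' : C} (f : A ⟶ B) (g : B ⟶ X) (δ : S.Ext X A)
    (f' : A' ⟶ B') (g' : B' ⟶ X') (δ' : S.Ext X' A') : Prop :=
  ∃ (iA : A ≅ A') (iB : B ≅ B') (iX : X ≅ X'),
    f ≫ iB.hom = iA.hom ≫ f' ∧ g ≫ iX.hom = iB.hom ≫ g' ∧
    S.push iA.hom δ = S.pull iX.hom δ'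

/-- A chain of `t` composable extriangles: inflations `obj i ⟶ obj (i+1)` each fitting
in an extriangle with cone `factor i`.  This underlies filtrations, inflation series
and composition series alike. -/
structure FChain (t : ℕ) where
  obj : Fin (t + 1) → C
  factor : Fin t → C
  f : ∀ i : Fin t, obj i.castSucc ⟶ obj i.succ
  g : ∀ i : Fin t, obj i.succ ⟶ factor i
  δ : ∀ i : Fin t, S.Ext (factor i) (obj i.castSucc)
  ext : ∀ i : Fin t, S.IsExtriangle (f i) (g i) (δ i)

/-- The composite `obj 0 ⟶ obj i` of the morphisms of a chain. -/
def FChain.comp {t : ℕ} (c : S.FChain t) : ∀ i : Fin (t + 1), c.obj 0 ⟶ c.obj i :=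
  Fin.induction (𝟙 _) (fun i ih => ih ≫ c.f i)

/-- The subcategory `F(P)` of objects admitting a filtration with factors in `P`. -/
def Filt (P : Set C) : Set C :=
  {M | ∃ (t : ℕ) (c : S.FChain t), IsZero (c.obj 0) ∧ c.obj (Fin.last t) = M ∧
      ∀ i, c.factor i ∈ P}

/-- An `(E, s)`-simple object: a non-zero object `M` such that in every extriangle
`A →a M → X ⇢` the inflation `a` is zero or an isomorphism. -/
def SSimple (M : C) : Prop :=
  ¬ IsZero M ∧ ∀ (A X : C) (a : A ⟶ M) (g : M ⟶ X) (δ : S.Ext X A),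
    S.IsExtriangle a g δ → a = 0 ∨ IsIso a

/-- The zero objects of `C` are `(E, s)`-simple-like. -/
def ZeroSimpleLike : Prop :=
  ∀ (A Z X : C) (f : A ⟶ Z) (g : Z ⟶ X) (δ : S.Ext X A),
    IsZero Z → S.IsExtriangle f g δ → IsZero A

/-- `c` is an `(E, s)`-composition series of `M`. -/
def IsCompSeries {t : ℕ} (c : S.FChain t) (M : C) : Prop :=
  IsZero (c.obj 0) ∧ c.obj (Fin.last t) = M ∧ ∀ i, S.SSimple (c.factor i)

/-- `(A, E, s)` is a length extriangulated category. -/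
def LengthCat : Prop :=
  ∀ M : C, (∃ (t : ℕ) (c : S.FChain t), S.IsCompSeries c M) ∧
    ∃ N : ℕ, ∀ (t : ℕ) (c : S.FChain t), S.IsCompSeries c M → t ≤ N

/-- `(A, E, s)` is a Jordan–Hölder extriangulated category: any two composition series
of an object have the same length and, up to a permutation, isomorphic simple factors. -/
def JordanHolder : Prop :=
  ∀ (M : C) (t t' : ℕ) (c : S.FChain t) (c' : S.FChain t'),
    S.IsCompSeries c M → S.IsCompSeries c' M →
    ∃ e : Fin t ≃ Fin t', ∀ i, Nonempty (c.factor i ≅ c'.factor (e i))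

/-- `c` is an `(E, s)`-inflation series of `B`: a filtration of `B` with non-zero factors. -/
def IsInflSeries {t : ℕ} (c : S.FChain t) (B : C) : Prop :=
  IsZero (c.obj 0) ∧ c.obj (Fin.last t) = B ∧ ∀ i, ¬ IsZero (c.factor i)

/-- `X` and `Y` admit isomorphic `(E, s)`-inflation series. -/
def HaveIsoInflSeries (X Y : C) : Prop :=
  ∃ (t : ℕ) (c d : S.FChain t), S.IsInflSeries c X ∧ S.IsInflSeries d Y ∧
    ∃ e : Equiv.Perm (Fin t), ∀ i, Nonempty (c.factor i ≅ d.factor (e i))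

/-- Simplicity of `M` with respect to the extriangulated structure restricted to the
extension-closed subcategory `𝒮`: extriangles of the restricted structure are exactly
the ambient extriangles all of whose terms lie in `𝒮`. -/
def SimpleIn (𝒮 : Set C) (M : C) : Prop :=
  M ∈ 𝒮 ∧ ¬ IsZero M ∧ ∀ (A X : C) (a : A ⟶ M) (g : M ⟶ X) (δ : S.Ext X A),
    A ∈ 𝒮 → X ∈ 𝒮 → S.IsExtriangle a g δ → a = 0 ∨ IsIso a

/-- `c` is a composition series of `M` in the extriangulated structure restricted to `𝒮`. -/
def IsCompSeriesIn (𝒮 : Set C) {t : ℕ} (c : S.FChain t) (M : C) : Prop :=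
  IsZero (c.obj 0) ∧ c.obj (Fin.last t) = M ∧ (∀ i, c.obj i ∈ 𝒮) ∧
    ∀ i, S.SimpleIn 𝒮 (c.factor i)

section Star

variable [HasZeroObject C] [HasFiniteBiproducts C]

/-- The subcategory `P ∗ Q` of objects `Z` admitting an extriangle `X → Z → Y ⇢`
with `X ∈ P` and `Y ∈ Q`. -/
def star (P Q : Set C) : Set C :=
  {Z | ∃ (X Y : C) (f : X ⟶ Z) (g : Z ⟶ Y) (δ : S.Ext Y X),
      X ∈ P ∧ Y ∈ Q ∧ S.IsExtriangle f g δ}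

/-- Iterated `∗` of a list of subcategories (the empty `∗` being the zero objects). -/
def starMany : List (Set C) → Set C
  | [] => {Z | IsZero Z}
  | P :: l => S.star P (starMany l)

end Star

/-- The relative projectives `P(P) = {Z : E(Z, Y) = 0 for all Y ∈ F(P)}`. -/
def projSet (P : Set C) : Set C :=
  {Z | ∀ Y ∈ S.Filt P, ∀ δ : S.Ext Z Y, δ = 0}

/-- `Hom(W, −)` is left exact on the extriangulated structure restricted to `𝒮`:
for every extriangle `A →a B → X ⇢` with all terms in `𝒮`, composition with `a`
is injective on morphisms from `W`. -/
def HomLeftExactOn (W : C) (𝒮 : Set C) : Prop :=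
  ∀ (A B X : C) (a : A ⟶ B) (g : B ⟶ X) (δ : S.Ext X A),
    A ∈ 𝒮 → B ∈ 𝒮 → X ∈ 𝒮 → S.IsExtriangle a g δ →
    ∀ φ ψ : W ⟶ A, φ ≫ a = ψ ≫ a → φ = ψ

/-- The subset of the free abelian group on objects consisting of the defining
relations of the Grothendieck group `K₀(A, E, s)`. -/
def K0Rels : Set (FreeAbelianGroup C) :=
  {x | ∃ (A B X : C) (f : A ⟶ B) (g : B ⟶ X) (δ : S.Ext X A), S.IsExtriangle f g δ ∧
      x = FreeAbelianGroup.of A + FreeAbelianGroup.of X - FreeAbelianGroup.of B} ∪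
  {x | ∃ (X Y : C) (_ : X ≅ Y), x = FreeAbelianGroup.of X - FreeAbelianGroup.of Y}

/-- `[M] = [M']` in the Grothendieck group `K₀(A, E, s)`, the quotient of the free
abelian group on (isomorphism classes of) objects by the extriangle relations. -/
def GrpRel (M M' : C) : Prop :=
  FreeAbelianGroup.of M - FreeAbelianGroup.of M' ∈ AddSubgroup.closure S.K0Rels

end PreExt

/-- The congruence defining the Grothendieck monoid: `MonRel S M M'` holds if and only
if `[M] = [M']` in the Grothendieck monoid `M(A, E, s)`, the quotient of the monoid of
isomorphism classes of objects (under `⊞`) by the congruence generated by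
`[B] ∼ [A] + [X]` for each extriangle `A → B → X ⇢`. -/
inductive MonRel {C : Type u} [Category.{v} C] [Preadditive C] [HasZeroObject C]
    [HasFiniteBiproducts C] (S : PreExt C) : C → C → Prop
  | of {A B X : C} {f : A ⟶ B} {g : B ⟶ X} {δ : S.Ext X A}
      (h : S.IsExtriangle f g δ) : MonRel S B (A ⊞ X)
  | iso {X Y : C} (e : X ≅ Y) : MonRel S X Y
  | symm {X Y : C} : MonRel S X Y → MonRel S Y X
  | trans {X Y Z : C} : MonRel S X Y → MonRel S Y Z → MonRel S X Z
  | add {X Y : C} (Z : C) : MonRel S X Y → MonRel S (X ⊞ Z) (Y ⊞ Z)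

/-- `[M]` is an atom of the Grothendieck monoid `M(A, E, s)`. -/
def IsAtomClass {C : Type u} [Category.{v} C] [Preadditive C] [HasZeroObject C]
    [HasFiniteBiproducts C] (S : PreExt C) (M : C) : Prop :=
  ¬ MonRel S M 0 ∧ ∀ X Y : C, MonRel S M (X ⊞ Y) → MonRel S X 0 ∨ MonRel S Y 0

/-- An additive category is weakly idempotent complete if every retraction admits a kernel. -/
def WeaklyIdemComplete (C : Type u) [Category.{v} C] [Preadditive C] : Prop :=
  ∀ (X Y : C) (r : X ⟶ Y), IsSplitEpi r → HasKernel r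

/-- A set of objects is closed under direct summands. -/
def ClosedSummands {C : Type u} [Category.{v} C] [Preadditive C] [HasZeroObject C]
    [HasFiniteBiproducts C] (P : Set C) : Prop :=
  ∀ (X Y Z : C), Z ∈ P → Nonempty (Z ≅ X ⊞ Y) → X ∈ P

/-- A Krull–Schmidt category: every object is a finite biproduct of objects having
local endomorphism rings. -/
def KrullSchmidtCat (C : Type u) [Category.{v} C] [Preadditive C] [HasZeroObject C]
    [HasFiniteBiproducts C] : Prop :=
  ∀ X : C, ∃ (n : ℕ) (Y : Fin n → C),
    (∀ i, IsLocalRing (End (Y i))) ∧ Nonempty (X ≅ ⨁ Y)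

/-- The closure `add Ψ` of a set of objects under finite direct sums and isomorphisms. -/
def addSet {C : Type u} [Category.{v} C] [Preadditive C] [HasZeroObject C]
    [HasFiniteBiproducts C] (P : Set C) : Set C :=
  {X | ∃ (m : ℕ) (f : Fin m → C), (∀ k, f k ∈ P) ∧ Nonempty (X ≅ ⨁ f)}

/-- An indecomposable object. -/
def Indec {C : Type u} [Category.{v} C] [Preadditive C] [HasZeroObject C]
    [HasFiniteBiproducts C] (X : C) : Prop :=
  ¬ IsZero X ∧ ∀ (Y Z : C), Nonempty (X ≅ Y ⊞ Z) → IsZero Y ∨ IsZero Z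

/-- A morphism `q` is right minimal. -/
def RightMinimal {C : Type u} [Category.{v} C] {X Y : C} (q : X ⟶ Y) : Prop :=
  ∀ g : X ⟶ X, g ≫ q = q → IsIso g

/-- The extra structure making an extriangulated category into an artin `R`-linear
extriangulated category: an `R`-module structure on each `E(X, A)` for which `E` is
`R`-bilinear, with all Hom-sets and all `E(X, A)` of finite length over `R`. -/
structure ArtinLinear {C : Type u} [Category.{v} C] [Preadditive C]
    (R : Type*) [CommRing R] [CategoryTheory.Linear R C] (S : PreExt C) where
  module : ∀ X A : C, Module R (S.Ext X A)
  push_smul : ∀ {X A A' : C} (r : R) (a : A ⟶ A') (δ : S.Ext X A),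
      S.push (r • a) δ = letI := module X A'; r • S.push a δ
  pull_smul : ∀ {X' X A : C} (r : R) (c : X' ⟶ X) (δ : S.Ext X A),
      S.pull (r • c) δ = letI := module X' A; r • S.pull c δ
  homFinite : ∀ X Y : C, IsFiniteLength R (X ⟶ Y)
  extFinite : ∀ X A : C, letI := module X A; IsFiniteLength R (S.Ext X A)

/-- An `E`-stratifying system: a finite family of indecomposable objects subject to
the orthogonality axioms (S1) and (S2). -/
structure IsStratSys {C : Type u} [Category.{v} C] [Preadditive C] [HasZeroObject C]
    [HasFiniteBiproducts C] (S : PreExt C) {n : ℕ} (Φ : Fin n → C) : Prop where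
  indec : ∀ i, Indec (Φ i)
  s1 : ∀ i j : Fin n, i < j → ∀ φ : Φ j ⟶ Φ i, φ = 0
  s2 : ∀ i j : Fin n, i ≤ j → ∀ δ : S.Ext (Φ j) (Φ i), δ = 0

/-- The data of extriangles `K i → Q i → Φ i ⇢η i` with `K i ∈ F(Φ_{j>i})`, as in
axiom (PS2) of a projective `E`-stratifying system. -/
structure ProjData {C : Type u} [Category.{v} C] [Preadditive C]
    (S : PreExt C) {n : ℕ} (Φ Q : Fin n → C) where
  K : Fin n → C
  k : ∀ i, K i ⟶ Q i
  q : ∀ i, Q i ⟶ Φ i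
  η : ∀ i, S.Ext (Φ i) (K i)
  ext : ∀ i, S.IsExtriangle (k i) (q i) (η i)
  kmem : ∀ i, K i ∈ S.Filt (Φ '' {j | i < j})

/-- `(Φ, Q)` is a projective `E`-stratifying system. -/
def IsProjSS {C : Type u} [Category.{v} C] [Preadditive C] [HasZeroObject C]
    [HasFiniteBiproducts C] (S : PreExt C) {n : ℕ} (Φ Q : Fin n → C) : Prop :=
  IsStratSys S Φ ∧ (∀ i j : Fin n, ∀ δ : S.Ext (Q i) (Φ j), δ = 0) ∧
    Nonempty (ProjData S Φ Q)

/-- `(Φ, Q)` is a minimal projective `E`-stratifying system: the morphisms `q i` of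
the extriangles witnessing (PS2) may be chosen right minimal. -/
def IsMinProjSS {C : Type u} [Category.{v} C] [Preadditive C] [HasZeroObject C]
    [HasFiniteBiproducts C] (S : PreExt C) {n : ℕ} (Φ Q : Fin n → C) : Prop :=
  IsStratSys S Φ ∧ (∀ i j : Fin n, ∀ δ : S.Ext (Q i) (Φ j), δ = 0) ∧
    ∃ d : ProjData S Φ Q, ∀ i, RightMinimal (d.q i)

section AuxWIC

variable {C : Type u} [Category.{v} C] [Preadditive C] [HasZeroObject C] [HasFiniteBiproducts C]

theorem aux_push_id (S : PreExt C) {X A : C} (δ : S.Ext X A) : S.push (𝟙 A) δ = δ := by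
  simp [PreExt.push]

theorem aux_push_comp (S : PreExt C) {X A A' A'' : C} (a : A ⟶ A') (b : A' ⟶ A'')
    (δ : S.Ext X A) : S.push (a ≫ b) δ = S.push b (S.push a δ) := by
  simp [PreExt.push]

theorem aux_pull_id (S : PreExt C) {X A : C} (δ : S.Ext X A) : S.pull (𝟙 X) δ = δ := by
  simp [PreExt.pull]

theorem aux_pull_comp (S : PreExt C) {X X' X'' A : C} (c : X' ⟶ X) (d : X'' ⟶ X')
    (δ : S.Ext X A) : S.pull (d ≫ c) δ = S.pull d (S.pull c δ) := by
  simp [PreExt.pull, op_comp]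

theorem aux_push_zero (S : PreExt C) {X A A' : C} (a : A ⟶ A') :
    S.push a (0 : S.Ext X A) = 0 := map_zero _

theorem aux_pull_zero (S : PreExt C) {X' X A : C} (c : X' ⟶ X) :
    S.pull c (0 : S.Ext X A) = 0 := map_zero _

theorem aux_push_infl (S : PreExt C) (hS : S.IsET) {A B X : C} {f : A ⟶ B} {g : B ⟶ X}
    {δ : S.Ext X A} (h : S.IsExtriangle f g δ) : S.push f δ = 0 := by
  obtain ⟨a, ha1, ha2⟩ := hS.et3op h (hS.realize_zero B X) (biprod.lift (𝟙 B) g) (𝟙 X)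
    (by simp)
  have ha : f = a := by simpa using congrArg (· ≫ biprod.fst) ha1
  rw [ha, ha2, aux_pull_id]

theorem aux_pull_defl (S : PreExt C) (hS : S.IsET) {A B X : C} {f : A ⟶ B} {g : B ⟶ X}
    {δ : S.Ext X A} (h : S.IsExtriangle f g δ) : S.pull g δ = 0 := by
  obtain ⟨c, hc1, hc2⟩ := hS.et3 (hS.realize_zero A B) h (𝟙 A) (biprod.desc f (𝟙 B))
    (by simp)
  have hc : c = g := by simpa using congrArg (biprod.inr ≫ ·) hc1
  rw [← hc, ← hc2, aux_push_zero]

theorem aux_delta_zero_of_section (S : PreExt C) (hS : S.IsET) {A B X : C} {f : A ⟶ B}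
    {g : B ⟶ X} {δ : S.Ext X A} (h : S.IsExtriangle f g δ) (ρ : B ⟶ A)
    (hρ : f ≫ ρ = 𝟙 A) : δ = 0 := by
  have h1 : S.push (f ≫ ρ) δ = 0 := by
    rw [aux_push_comp, aux_push_infl S hS h, aux_push_zero]
  rwa [hρ, aux_push_id] at h1

theorem aux_delta_zero_of_retraction (S : PreExt C) (hS : S.IsET) {A B X : C} {f : A ⟶ B}
    {g : B ⟶ X} {δ : S.Ext X A} (h : S.IsExtriangle f g δ) (σ : X ⟶ B)
    (hσ : σ ≫ g = 𝟙 X) : δ = 0 := by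
  have h1 : S.pull (σ ≫ g) δ = 0 := by
    rw [aux_pull_comp, aux_pull_defl S hS h, aux_pull_zero]
  rwa [hσ, aux_pull_id] at h1

theorem aux_ext_id_right (S : PreExt C) (hS : S.IsET) (T : C) :
    S.IsExtriangle (𝟙 T) (0 : T ⟶ (0:C)) (0 : S.Ext (0:C) T) := by
  have h := hS.realize_iso
    (Iso.mk (biprod.fst : T ⊞ (0:C) ⟶ T) biprod.inl
      (by
        apply biprod.hom_ext
        · simp
        · exact (isZero_zero C).eq_of_tgt _ _)
      (by simp))
    (hS.realize_zero T (0:C))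
  have h' : S.IsExtriangle ((biprod.inl : T ⟶ T ⊞ (0:C)) ≫ biprod.fst)
      ((biprod.inl : T ⟶ T ⊞ (0:C)) ≫ biprod.snd) (0 : S.Ext (0:C) T) := h
  rwa [biprod.inl_fst, biprod.inl_snd] at h'

theorem aux_ext_id_left (S : PreExt C) (hS : S.IsET) (T : C) :
    S.IsExtriangle (0 : (0:C) ⟶ T) (𝟙 T) (0 : S.Ext T (0:C)) := by
  have h := hS.realize_iso
    (Iso.mk (biprod.snd : (0:C) ⊞ T ⟶ T) biprod.inr
      (by
        apply biprod.hom_ext'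
        · exact (isZero_zero C).eq_of_src _ _
        · simp)
      (by simp))
    (hS.realize_zero (0:C) T)
  have h' : S.IsExtriangle ((biprod.inl : (0:C) ⟶ (0:C) ⊞ T) ≫ biprod.snd)
      ((biprod.inr : T ⟶ (0:C) ⊞ T) ≫ biprod.snd) (0 : S.Ext T (0:C)) := h
  rwa [biprod.inl_snd, biprod.inr_snd] at h'

theorem aux_defl_map_id (S : PreExt C) (hS : S.IsET) {A D : C} {d : A ⟶ D}
    (hd : S.IsDeflation d) (Q : C) : S.IsDeflation (biprod.map d (𝟙 Q)) := by
  obtain ⟨K, k, δ, h⟩ := hd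
  exact ⟨_, _, _, hS.realize_sum h (aux_ext_id_left S hS Q)⟩

theorem aux_infl_map_id (S : PreExt C) (hS : S.IsET) {A X : C} {i : A ⟶ X}
    (hi : S.IsInflation i) (K : C) : S.IsInflation (biprod.map (𝟙 K) i) := by
  obtain ⟨Y, p, δ, h⟩ := hi
  exact ⟨_, _, _, hS.realize_sum (aux_ext_id_right S hS K) h⟩

theorem aux_defl_comp (S : PreExt C) (hS : S.IsET) {G B' A' : C} {g₁ : G ⟶ B'}
    {f₁ : B' ⟶ A'} (h1 : S.IsDeflation g₁) (h2 : S.IsDeflation f₁) :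
    S.IsDeflation (g₁ ≫ f₁) := by
  obtain ⟨F, q, δq, hq⟩ := h1
  obtain ⟨D, p, δp, hp⟩ := h2
  obtain ⟨E₀, hh, dd, ee, δ'', H1, -⟩ := hS.et4op hp hq
  exact ⟨E₀, hh, δ'', H1⟩

theorem aux_infl_comp (S : PreExt C) (hS : S.IsET) {A B G : C} {f : A ⟶ B} {g : B ⟶ G}
    (h1 : S.IsInflation f) (h2 : S.IsInflation g) : S.IsInflation (f ≫ g) := by
  obtain ⟨D, f', δ₁, hf⟩ := h1
  obtain ⟨F, g', δ₂, hg⟩ := h2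
  obtain ⟨E₀, hh, dd, ee, δ'', H1, -⟩ := hS.et4 hf hg
  exact ⟨E₀, hh, δ'', H1⟩

theorem aux_defl_pre_iso (S : PreExt C) (hS : S.IsET) {M B D : C} (e : M ≅ B) {d : B ⟶ D}
    (hd : S.IsDeflation d) : S.IsDeflation (e.hom ≫ d) := by
  obtain ⟨K, k, δ, h⟩ := hd
  have h2 := hS.realize_iso e.symm h
  exact ⟨K, k ≫ e.inv, δ, h2⟩

theorem aux_infl_post_iso (S : PreExt C) (hS : S.IsET) {A B B' : C} (e : B ≅ B')
    {i : A ⟶ B} (hi : S.IsInflation i) : S.IsInflation (i ≫ e.hom) := by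
  obtain ⟨X, g, δ, h⟩ := hi
  exact ⟨X, e.inv ≫ g, δ, hS.realize_iso e h⟩

theorem aux_factor_infl (S : PreExt C) (hS : S.IsET) {A B X T : C} {f : A ⟶ B} {g : B ⟶ X}
    {δ : S.Ext X A} (h : S.IsExtriangle f g δ) (t : T ⟶ B) (ht : t ≫ g = 0) :
    ∃ z : T ⟶ A, z ≫ f = t := by
  obtain ⟨a, ha, -⟩ := hS.et3op (aux_ext_id_right S hS T) h t (0 : (0:C) ⟶ X)
    (by simp [ht])
  exact ⟨a, by simpa using ha.symm⟩

theorem aux_lift_defl (S : PreExt C) (hS : S.IsET) {A B X T : C} {f : A ⟶ B} {g : B ⟶ X}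
    {δ : S.Ext X A} (h : S.IsExtriangle f g δ) (s : B ⟶ T) (hs : f ≫ s = 0) :
    ∃ c : X ⟶ T, g ≫ c = s := by
  obtain ⟨c, hc, -⟩ := hS.et3 h (aux_ext_id_left S hS T) (0 : A ⟶ (0:C)) s
    (by simp [hs])
  exact ⟨c, by simpa using hc⟩

theorem aux_splitMono_structure (S : PreExt C) (hS : S.IsET) {X Y Q : C} {s : X ⟶ Y}
    {c : Y ⟶ Q} {δ : S.Ext Q X} (h : S.IsExtriangle s c δ) (ρ : Y ⟶ X)
    (hρ : s ≫ ρ = 𝟙 X) :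
    ∃ w : Y ≅ X ⊞ Q, s ≫ w.hom = biprod.inl ∧ w.hom ≫ biprod.snd = c := by
  have hδ : δ = 0 := aux_delta_zero_of_section S hS h ρ hρ
  rw [hδ] at h
  obtain ⟨e, he1, he2⟩ := hS.realize_unique h (hS.realize_zero X Q)
  exact ⟨e, he1, he2⟩

theorem aux_splitEpi_structure (S : PreExt C) (hS : S.IsET) {K X Y : C} {k : K ⟶ X}
    {r : X ⟶ Y} {δ : S.Ext Y K} (h : S.IsExtriangle k r δ) (σ : Y ⟶ X)
    (hσ : σ ≫ r = 𝟙 Y) :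
    ∃ w : X ≅ K ⊞ Y, k ≫ w.hom = biprod.inl ∧ w.hom ≫ biprod.snd = r := by
  have hδ : δ = 0 := aux_delta_zero_of_retraction S hS h σ hσ
  rw [hδ] at h
  obtain ⟨e, he1, he2⟩ := hS.realize_unique h (hS.realize_zero K Y)
  exact ⟨e, he1, he2⟩

theorem aux_cancel_inl {A B E : C} (ψ : A ⊞ B ≅ A ⊞ E)
    (hψ : (biprod.inl : A ⟶ A ⊞ B) ≫ ψ.hom = biprod.inl) :
    (biprod.inr ≫ ψ.hom ≫ biprod.snd) ≫ biprod.inr ≫ ψ.inv ≫ biprod.snd = 𝟙 B ∧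
    (biprod.inr ≫ ψ.inv ≫ biprod.snd) ≫ biprod.inr ≫ ψ.hom ≫ biprod.snd = 𝟙 E := by
  have hinv : (biprod.inl : A ⟶ A ⊞ E) ≫ ψ.inv = biprod.inl := by
    rw [← hψ, Category.assoc, Iso.hom_inv_id, Category.comp_id]
  have htotE : (biprod.snd : A ⊞ E ⟶ E) ≫ biprod.inr
      = 𝟙 (A ⊞ E) - biprod.fst ≫ biprod.inl := eq_sub_iff_add_eq'.2 biprod.total
  have htotB : (biprod.snd : A ⊞ B ⟶ B) ≫ biprod.inr
      = 𝟙 (A ⊞ B) - biprod.fst ≫ biprod.inl := eq_sub_iff_add_eq'.2 biprod.total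
  constructor
  · calc (biprod.inr ≫ ψ.hom ≫ biprod.snd) ≫ biprod.inr ≫ ψ.inv ≫ biprod.snd
        = biprod.inr ≫ ψ.hom ≫ (biprod.snd ≫ biprod.inr) ≫ ψ.inv ≫ biprod.snd := by
          simp only [Category.assoc]
      _ = 𝟙 B := by
          rw [htotE]
          simp [Preadditive.sub_comp, Preadditive.comp_sub, reassoc_of% hinv]
  · calc (biprod.inr ≫ ψ.inv ≫ biprod.snd) ≫ biprod.inr ≫ ψ.hom ≫ biprod.snd
        = biprod.inr ≫ ψ.inv ≫ (biprod.snd ≫ biprod.inr) ≫ ψ.hom ≫ biprod.snd := by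
          simp only [Category.assoc]
      _ = 𝟙 E := by
          rw [htotB]
          simp [Preadditive.sub_comp, Preadditive.comp_sub, reassoc_of% hψ]

theorem aux_cancel_snd {B X E : C} (ψ : B ⊞ X ≅ E ⊞ X)
    (hψ : ψ.hom ≫ (biprod.snd : E ⊞ X ⟶ X) = biprod.snd) :
    (biprod.inl ≫ ψ.hom ≫ biprod.fst) ≫ biprod.inl ≫ ψ.inv ≫ biprod.fst = 𝟙 B ∧
    (biprod.inl ≫ ψ.inv ≫ biprod.fst) ≫ biprod.inl ≫ ψ.hom ≫ biprod.fst = 𝟙 E := by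
  have hinv : ψ.inv ≫ (biprod.snd : B ⊞ X ⟶ X) = biprod.snd := by
    rw [← hψ, ← Category.assoc, Iso.inv_hom_id, Category.id_comp]
  have htotE : (biprod.fst : E ⊞ X ⟶ E) ≫ biprod.inl
      = 𝟙 (E ⊞ X) - biprod.snd ≫ biprod.inr := eq_sub_iff_add_eq.2 biprod.total
  have htotB : (biprod.fst : B ⊞ X ⟶ B) ≫ biprod.inl
      = 𝟙 (B ⊞ X) - biprod.snd ≫ biprod.inr := eq_sub_iff_add_eq.2 biprod.total
  constructor
  · calc (biprod.inl ≫ ψ.hom ≫ biprod.fst) ≫ biprod.inl ≫ ψ.inv ≫ biprod.fst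
        = biprod.inl ≫ ψ.hom ≫ (biprod.fst ≫ biprod.inl) ≫ ψ.inv ≫ biprod.fst := by
          simp only [Category.assoc]
      _ = 𝟙 B := by
          rw [htotE]
          simp [Preadditive.sub_comp, Preadditive.comp_sub, reassoc_of% hψ]
  · calc (biprod.inl ≫ ψ.inv ≫ biprod.fst) ≫ biprod.inl ≫ ψ.hom ≫ biprod.fst
        = biprod.inl ≫ ψ.inv ≫ (biprod.fst ≫ biprod.inl) ≫ ψ.hom ≫ biprod.fst := by
          simp only [Category.assoc]
      _ = 𝟙 E := by
          rw [htotB]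
          simp [Preadditive.sub_comp, Preadditive.comp_sub, reassoc_of% hinv]

theorem aux_desc_defl (S : PreExt C) (hS : S.IsET)
    (h2 : ∀ (X Y : C) (r : X ⟶ Y), IsSplitEpi r → S.IsDeflation r)
    {A D : C} {d : A ⟶ D} (hd : S.IsDeflation d) {Q : C} (t : Q ⟶ D) :
    S.IsDeflation (biprod.desc d t) := by
  have hcomp := aux_defl_comp S hS (aux_defl_map_id S hS hd Q)
    (h2 _ _ (biprod.desc (𝟙 D) t) ⟨⟨⟨biprod.inl, by simp⟩⟩⟩)
  rwa [show biprod.map d (𝟙 Q) ≫ biprod.desc (𝟙 D) t = biprod.desc d t from by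
    apply biprod.hom_ext' <;> simp] at hcomp

theorem aux_lift_infl (S : PreExt C) (hS : S.IsET)
    (h3 : ∀ (X Y : C) (s : X ⟶ Y), IsSplitMono s → S.IsInflation s)
    {A X : C} {i : A ⟶ X} (hi : S.IsInflation i) {K : C} (t : A ⟶ K) :
    S.IsInflation (biprod.lift t i) := by
  have hcomp := aux_infl_comp S hS
    (h3 _ _ (biprod.lift t (𝟙 A)) ⟨⟨⟨biprod.snd, by simp⟩⟩⟩)
    (aux_infl_map_id S hS hi K)
  rwa [show biprod.lift t (𝟙 A) ≫ biprod.map (𝟙 K) i = biprod.lift t i from by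
    apply biprod.hom_ext <;> simp] at hcomp

theorem aux_halfB (S : PreExt C) (hS : S.IsET)
    (h2 : ∀ (X Y : C) (r : X ⟶ Y), IsSplitEpi r → S.IsDeflation r)
    (h3 : ∀ (X Y : C) (s : X ⟶ Y), IsSplitMono s → S.IsInflation s)
    {A B D : C} (f : A ⟶ B) (g : B ⟶ D) (h : S.IsDeflation (f ≫ g)) :
    S.IsDeflation g := by
  have hstep2 : S.IsDeflation ((biprod.snd : A ⊞ B ⟶ B) ≫ g) := by
    obtain ⟨Q', cm, ρ, hjext⟩ := h3 A (A ⊞ B) (biprod.lift (𝟙 A) f) ⟨⟨⟨biprod.fst, by simp⟩⟩⟩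
    obtain ⟨w, hw1, -⟩ := aux_splitMono_structure S hS hjext biprod.fst (by simp)
    have hinlw : (biprod.inl : A ⟶ A ⊞ Q') ≫ w.inv = biprod.lift (𝟙 A) f := by
      rw [← hw1, Category.assoc, Iso.hom_inv_id, Category.comp_id]
    have hd := aux_desc_defl S hS h2 h (biprod.inr ≫ w.inv ≫ biprod.snd ≫ g)
    have heq : biprod.desc (f ≫ g) (biprod.inr ≫ w.inv ≫ biprod.snd ≫ g)
        = w.inv ≫ biprod.snd ≫ g := by
      apply biprod.hom_ext'
      · rw [biprod.inl_desc, reassoc_of% hinlw]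
        simp
      · simp
    rw [heq] at hd
    have hfin := aux_defl_pre_iso S hS w hd
    simpa using hfin
  obtain ⟨K, x, δ, hx⟩ := hstep2
  obtain ⟨z, hz⟩ := aux_factor_infl S hS hx (biprod.inl : A ⟶ A ⊞ B) (by simp)
  obtain ⟨Q, z', ρ', hzext⟩ := h3 A K z
    ⟨⟨⟨x ≫ biprod.fst, by rw [← Category.assoc, hz]; simp⟩⟩⟩
  obtain ⟨E₀, h₀, d, e, δ'', H1, H2, -, -, -, H6⟩ := hS.et4 hzext hx
  rw [hz] at H1
  have hδ'' : δ'' = 0 := aux_delta_zero_of_section S hS H1 biprod.fst (by simp)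
  rw [hδ''] at H1
  obtain ⟨ψ, hψ1, hψ2⟩ := hS.realize_unique H1 (hS.realize_zero A E₀)
  obtain ⟨huv, hvu⟩ := aux_cancel_inl ψ hψ1
  have H2' := hS.realize_iso (Iso.mk (biprod.inr ≫ ψ.inv ≫ biprod.snd)
      (biprod.inr ≫ ψ.hom ≫ biprod.snd) hvu huv) H2
  have H2'' : S.IsExtriangle (d ≫ (biprod.inr ≫ ψ.inv ≫ biprod.snd))
      ((biprod.inr ≫ ψ.hom ≫ biprod.snd) ≫ e) (S.push z' δ) := H2'
  have hg : (biprod.inr ≫ ψ.hom ≫ biprod.snd) ≫ e = g := by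
    simp only [Category.assoc]
    rw [← Category.assoc ψ.hom biprod.snd e, hψ2, H6, ← Category.assoc, biprod.inr_snd,
      Category.id_comp]
  rw [hg] at H2''
  exact ⟨Q, d ≫ (biprod.inr ≫ ψ.inv ≫ biprod.snd), S.push z' δ, H2''⟩

theorem aux_halfA (S : PreExt C) (hS : S.IsET)
    (h2 : ∀ (X Y : C) (r : X ⟶ Y), IsSplitEpi r → S.IsDeflation r)
    (h3 : ∀ (X Y : C) (s : X ⟶ Y), IsSplitMono s → S.IsInflation s)
    {A B X : C} (f : A ⟶ B) (g : B ⟶ X) (h : S.IsInflation (f ≫ g)) :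
    S.IsInflation f := by
  have hstep2 : S.IsInflation (f ≫ (biprod.inl : B ⟶ B ⊞ X)) := by
    obtain ⟨K', k, κ, hpext⟩ := h2 (B ⊞ X) X (biprod.desc g (𝟙 X)) ⟨⟨⟨biprod.inr, by simp⟩⟩⟩
    obtain ⟨w, -, hw2⟩ := aux_splitEpi_structure S hS hpext biprod.inr (by simp)
    have hl := aux_lift_infl S hS h3 h (f ≫ biprod.inl ≫ w.hom ≫ biprod.fst)
    have heq : biprod.lift (f ≫ biprod.inl ≫ w.hom ≫ biprod.fst) (f ≫ g)
        = (f ≫ biprod.inl) ≫ w.hom := by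
      apply biprod.hom_ext <;> simp [hw2]
    rw [heq] at hl
    have hfin := aux_infl_post_iso S hS w.symm hl
    simpa using hfin
  obtain ⟨R, y, δ, hy⟩ := hstep2
  obtain ⟨c, hc⟩ := aux_lift_defl S hS hy (biprod.snd : B ⊞ X ⟶ X) (by simp)
  have hcdefl := h2 R X c ⟨⟨⟨biprod.inr ≫ y, by rw [Category.assoc, hc]; simp⟩⟩⟩
  obtain ⟨M, m, κ', hm⟩ := hcdefl
  obtain ⟨E₀, h₀, d, e, δ'', H1, H2, -, -, -, H6⟩ := hS.et4op hm hy
  rw [hc] at H1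
  have hδ'' : δ'' = 0 := aux_delta_zero_of_retraction S hS H1 biprod.inr (by simp)
  rw [hδ''] at H1
  obtain ⟨ψ, hψ1, hψ2⟩ := hS.realize_unique H1 (hS.realize_zero E₀ X)
  obtain ⟨huv, hvu⟩ := aux_cancel_snd ψ hψ2
  have H2' := hS.realize_iso (Iso.mk (biprod.inl ≫ ψ.inv ≫ biprod.fst)
      (biprod.inl ≫ ψ.hom ≫ biprod.fst) hvu huv) H2
  have H2'' : S.IsExtriangle (e ≫ (biprod.inl ≫ ψ.inv ≫ biprod.fst))
      ((biprod.inl ≫ ψ.hom ≫ biprod.fst) ≫ d) (S.pull m δ) := H2'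
  have hf : e ≫ (biprod.inl ≫ ψ.inv ≫ biprod.fst) = f := by
    have h1 : e ≫ (biprod.inl : E₀ ⟶ E₀ ⊞ X) = (f ≫ biprod.inl) ≫ ψ.hom := by
      rw [← hψ1, ← Category.assoc, H6]
    rw [← Category.assoc, h1]
    simp
  rw [hf] at H2''
  exact ⟨M, (biprod.inl ≫ ψ.hom ≫ biprod.fst) ≫ d, S.pull m δ, H2''⟩

noncomputable def auxBraid (X Y : C) : X ⊞ Y ≅ Y ⊞ X where
  hom := biprod.lift biprod.snd biprod.fst
  inv := biprod.lift biprod.snd biprod.fst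
  hom_inv_id := by apply biprod.hom_ext <;> simp
  inv_hom_id := by apply biprod.hom_ext <;> simp

theorem aux_splitting {X Y : C} (r : X ⟶ Y) (s : Y ⟶ X) (hs : s ≫ r = 𝟙 Y) [HasKernel r] :
    ∃ e : kernel r ⊞ Y ≅ X, biprod.inl ≫ e.hom = kernel.ι r ∧
      biprod.inr ≫ e.hom = s ∧ e.inv ≫ biprod.snd = r := by
  have hq0 : (𝟙 X - r ≫ s) ≫ r = 0 := by
    simp [Preadditive.sub_comp, hs]
  obtain ⟨q, hqι⟩ : ∃ q : X ⟶ kernel r, q ≫ kernel.ι r = 𝟙 X - r ≫ s :=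
    ⟨kernel.lift r _ hq0, kernel.lift_ι _ _ _⟩
  have hιq : kernel.ι r ≫ q = 𝟙 (kernel r) := by
    have h1 : (kernel.ι r ≫ q) ≫ kernel.ι r = 𝟙 (kernel r) ≫ kernel.ι r := by
      rw [Category.assoc, hqι, Preadditive.comp_sub, Category.comp_id, ← Category.assoc,
        kernel.condition, zero_comp, sub_zero, Category.id_comp]
    exact (cancel_mono (kernel.ι r)).1 h1
  have hsq : s ≫ q = 0 := by
    have h1 : (s ≫ q) ≫ kernel.ι r = 0 ≫ kernel.ι r := by
      rw [Category.assoc, hqι, Preadditive.comp_sub, Category.comp_id, ← Category.assoc,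
        hs, Category.id_comp, sub_self, zero_comp]
    exact (cancel_mono (kernel.ι r)).1 h1
  refine ⟨Iso.mk (biprod.desc (kernel.ι r) s) (biprod.lift q r) ?_ ?_,
    (by simp : biprod.inl ≫ biprod.desc (kernel.ι r) s = kernel.ι r),
    (by simp : biprod.inr ≫ biprod.desc (kernel.ι r) s = s),
    (by simp : biprod.lift q r ≫ biprod.snd = r)⟩
  · apply biprod.hom_ext' <;> apply biprod.hom_ext <;>
      simp [reassoc_of% hιq, hιq, reassoc_of% hsq, hsq, kernel.condition, hs]
  · rw [biprod.lift_desc, hqι]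
    abel

end AuxWIC

section Statements

variable {C : Type u} [Category.{v} C] [Preadditive C] [HasZeroObject C] [HasFiniteBiproducts C]

/-- characterisations of weak idempotent completeness. -/
theorem stmt0 (S : PreExt C) (hS : S.IsET) :
    List.TFAE
      [WeaklyIdemComplete C,
       ∀ (X Y : C) (r : X ⟶ Y), IsSplitEpi r → S.IsDeflation r,
       ∀ (X Y : C) (s : X ⟶ Y), IsSplitMono s → S.IsInflation s,
       (∀ (A B X : C) (f : A ⟶ B) (g : B ⟶ X), S.IsInflation (f ≫ g) → S.IsInflation f) ∧
         (∀ (A B X : C) (f : A ⟶ B) (g : B ⟶ X), S.IsDeflation (f ≫ g) → S.IsDeflation g)] := by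
  tfae_have h12 : 1 → 2 := by
    intro h1 X Y r hr
    obtain ⟨⟨s, hs⟩⟩ := hr.exists_splitEpi
    haveI : HasKernel r := h1 X Y r hr
    obtain ⟨e, he1, he2, he3⟩ := aux_splitting r s hs
    have h := hS.realize_iso e (hS.realize_zero (kernel r) Y)
    rw [he1, he3] at h
    exact ⟨_, _, _, h⟩
  tfae_have h13 : 1 → 3 := by
    intro h1 X Y s hsm
    obtain ⟨⟨r, hr⟩⟩ := hsm.exists_splitMono
    haveI : HasKernel r := h1 Y X r ⟨⟨⟨s, hr⟩⟩⟩
    obtain ⟨e, he1, he2, he3⟩ := aux_splitting r s hr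
    have h := hS.realize_iso (auxBraid X (kernel r) ≪≫ e) (hS.realize_zero X (kernel r))
    have h' : S.IsExtriangle
        ((biprod.inl : X ⟶ X ⊞ kernel r) ≫ (auxBraid X (kernel r)).hom ≫ e.hom)
        ((auxBraid X (kernel r) ≪≫ e).inv ≫ biprod.snd) (0 : S.Ext (kernel r) X) := h
    rw [← Category.assoc, show (biprod.inl : X ⟶ X ⊞ kernel r) ≫ (auxBraid X (kernel r)).hom
        = biprod.inr from by apply biprod.hom_ext <;> simp [auxBraid], he2] at h'
    exact ⟨_, _, _, h'⟩
  tfae_have h21 : 2 → 1 := by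
    intro h2 X Y r hr
    obtain ⟨K, k, δ, hk⟩ := h2 X Y r hr
    obtain ⟨⟨s, hs⟩⟩ := hr.exists_splitEpi
    obtain ⟨w, hw1, hw2⟩ := aux_splitEpi_structure S hS hk s hs
    have hιr : (biprod.inl ≫ w.inv) ≫ r = 0 := by
      rw [Category.assoc, ← hw2]
      simp
    refine HasLimit.mk ⟨KernelFork.ofι (biprod.inl ≫ w.inv) hιr,
      KernelFork.IsLimit.ofι _ hιr (fun {W} u _ => u ≫ w.hom ≫ biprod.fst) ?_ ?_⟩
    · intro W u hu
      have htot : (biprod.fst : K ⊞ Y ⟶ K) ≫ biprod.inl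
          = 𝟙 (K ⊞ Y) - biprod.snd ≫ biprod.inr := eq_sub_iff_add_eq.2 biprod.total
      calc (u ≫ w.hom ≫ biprod.fst) ≫ biprod.inl ≫ w.inv
          = u ≫ w.hom ≫ (biprod.fst ≫ biprod.inl) ≫ w.inv := by simp only [Category.assoc]
        _ = u := by
            rw [htot]
            simp [Preadditive.sub_comp, Preadditive.comp_sub, reassoc_of% hw2, hw2,
              reassoc_of% hu, hu]
    · intro W u hu m hm
      have hret : (biprod.inl ≫ w.inv) ≫ w.hom ≫ biprod.fst = 𝟙 K := by simp
      calc m = m ≫ ((biprod.inl ≫ w.inv) ≫ w.hom ≫ biprod.fst) := by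
            rw [hret, Category.comp_id]
        _ = (m ≫ biprod.inl ≫ w.inv) ≫ w.hom ≫ biprod.fst := by simp only [Category.assoc]
        _ = u ≫ w.hom ≫ biprod.fst := by rw [hm]
  tfae_have h31 : 3 → 1 := by
    intro h3 X Y r hr
    obtain ⟨⟨s, hs⟩⟩ := hr.exists_splitEpi
    obtain ⟨Q, cm, ρ, hsext⟩ := h3 Y X s ⟨⟨⟨r, hs⟩⟩⟩
    obtain ⟨w, hw1, hw2⟩ := aux_splitMono_structure S hS hsext r hs
    have hsw : (biprod.inl : Y ⟶ Y ⊞ Q) ≫ w.inv = s := by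
      rw [← hw1, Category.assoc, Iso.hom_inv_id, Category.comp_id]
    have hπr : (𝟙 X - r ≫ s) ≫ r = 0 := by
      simp [Preadditive.sub_comp, hs]
    have hsπ : s ≫ (𝟙 X - r ≫ s) = 0 := by
      simp [Preadditive.comp_sub, reassoc_of% hs]
    have hιr : (biprod.inr ≫ w.inv ≫ (𝟙 X - r ≫ s)) ≫ r = 0 := by
      simp only [Category.assoc, hπr, comp_zero]
    refine HasLimit.mk ⟨KernelFork.ofι (biprod.inr ≫ w.inv ≫ (𝟙 X - r ≫ s)) hιr,
      KernelFork.IsLimit.ofι _ hιr (fun {W} u _ => u ≫ w.hom ≫ biprod.snd) ?_ ?_⟩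
    · intro W u hu
      have htot : (biprod.snd : Y ⊞ Q ⟶ Q) ≫ biprod.inr
          = 𝟙 (Y ⊞ Q) - biprod.fst ≫ biprod.inl := eq_sub_iff_add_eq'.2 biprod.total
      calc (u ≫ w.hom ≫ biprod.snd) ≫ biprod.inr ≫ w.inv ≫ (𝟙 X - r ≫ s)
          = u ≫ w.hom ≫ (biprod.snd ≫ biprod.inr) ≫ w.inv ≫ (𝟙 X - r ≫ s) := by
            simp only [Category.assoc]
        _ = u := by
            rw [htot]
            simp [Preadditive.sub_comp, Preadditive.comp_sub, reassoc_of% hsw, hsw,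
              hsπ, reassoc_of% hs, hs, reassoc_of% hu, hu]
    · intro W u hu m hm
      have hιcm : (biprod.inr ≫ w.inv ≫ (𝟙 X - r ≫ s)) ≫ w.hom ≫ biprod.snd = 𝟙 Q := by
        simp [Preadditive.sub_comp, Preadditive.comp_sub, reassoc_of% hw1, hw1,
          reassoc_of% hs, hs]
      calc m = m ≫ ((biprod.inr ≫ w.inv ≫ (𝟙 X - r ≫ s)) ≫ w.hom ≫ biprod.snd) := by
            rw [hιcm, Category.comp_id]
        _ = (m ≫ biprod.inr ≫ w.inv ≫ (𝟙 X - r ≫ s)) ≫ w.hom ≫ biprod.snd := by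
            simp only [Category.assoc]
        _ = u ≫ w.hom ≫ biprod.snd := by rw [hm]
  tfae_have h14 : 1 → 4 := by
    intro h1
    exact ⟨fun A B X f g h => aux_halfA S hS (h12 h1) (h13 h1) f g h,
      fun A B X f g h => aux_halfB S hS (h12 h1) (h13 h1) f g h⟩
  tfae_have h42 : 4 → 2 := by
    intro h4 X Y r hr
    obtain ⟨⟨s, hs⟩⟩ := hr.exists_splitEpi
    refine h4.2 Y X Y s r ?_
    rw [hs]
    exact ⟨_, _, _, aux_ext_id_left S hS Y⟩
  tfae_finish

end Statements

end ExtriPaper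
end

section
/- Let (A, E, s) be a weakly idempotent complete extriangulated category. Then any extriangle of the form A → B1 ⊕ B2 →(g1⊕g2) C1 ⊕ C2 ⇢δ, whose deflation is a diagonal matrix diag(g1, g2), is isomorphic to the direct sum of two extriangles ⟨A1 →f1 B1 →g1 C1, δ1⟩ ⊕ ⟨A2 →f2 B2 →g2 C2, δ2⟩. -/
/-!
Common axiomatic framework: extriangulated categories in the sense of Nakaoka–Palu,
formalised as a biadditive functor `E` together with a realisation predicate
`IsExtriangle` subject to the axioms (ET1)–(ET4), (ET3)ᵒᵖ, (ET4)ᵒᵖ.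
-/

open CategoryTheory CategoryTheory.Limits ZeroObject

attribute [local instance] CategoryTheory.Limits.hasBinaryBiproducts_of_finite_biproducts

universe v u

namespace ExtriPaper

section Statements

variable {C : Type u} [Category.{v} C] [Preadditive C] [HasZeroObject C] [HasFiniteBiproducts C]

section Aux
set_option linter.unusedSectionVars false
set_option maxHeartbeats 1000000

variable {C : Type u} [Category.{v} C] [Preadditive C] [HasZeroObject C] [HasFiniteBiproducts C]
variable {S : PreExt C}

lemma push_comp {X A A' A'' : C} (a : A ⟶ A') (b : A' ⟶ A'') (δ : S.Ext X A) :
    S.push (a ≫ b) δ = S.push b (S.push a δ) := by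
  simp [PreExt.push, Functor.map_comp]

lemma pull_comp {X'' X' X A : C} (a : X'' ⟶ X') (b : X' ⟶ X) (δ : S.Ext X A) :
    S.pull (a ≫ b) δ = S.pull a (S.pull b δ) := by
  simp [PreExt.pull, op_comp, Functor.map_comp, NatTrans.comp_app, CategoryTheory.comp_apply]

lemma push_id {X A : C} (δ : S.Ext X A) : S.push (𝟙 A) δ = δ := by
  simp [PreExt.push]

lemma pull_id {X A : C} (δ : S.Ext X A) : S.pull (𝟙 X) δ = δ := by
  simp [PreExt.pull]

lemma push_pull {X' X A A' : C} (a : A ⟶ A') (c : X' ⟶ X) (δ : S.Ext X A) :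
    S.pull c (S.push a δ) = S.push a (S.pull c δ) := by
  simp only [PreExt.push, PreExt.pull]
  exact ConcreteCategory.congr_hom ((S.E.map c.op).naturality a) δ

lemma push_ext_zero {X A A' : C} (a : A ⟶ A') : S.push a (0 : S.Ext X A) = 0 :=
  map_zero _

lemma pull_ext_zero {X' X A : C} (c : X' ⟶ X) : S.pull c (0 : S.Ext X A) = 0 :=
  map_zero _

lemma push_zero_mor (hS : S.IsET) {X A A' : C} (δ : S.Ext X A) :
    S.push (0 : A ⟶ A') δ = 0 := by
  have h := hS.push_add (0 : A ⟶ A') 0 δ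
  rw [add_zero] at h
  exact left_eq_add.mp h

lemma push_sub_mor (hS : S.IsET) {X A A' : C} (a b : A ⟶ A') (δ : S.Ext X A) :
    S.push (a - b) δ = S.push a δ - S.push b δ := by
  have h := hS.push_add (a - b) b δ
  rw [sub_add_cancel] at h
  exact eq_sub_of_add_eq h.symm

lemma realize_iso' (hS : S.IsET) {A B B' X : C} {f : A ⟶ B} {g : B ⟶ X} {δ : S.Ext X A}
    (h : S.IsExtriangle f g δ) (e : B ≅ B') {f' : A ⟶ B'} {g' : B' ⟶ X}
    (hf : f ≫ e.hom = f') (hg : e.inv ≫ g = g') : S.IsExtriangle f' g' δ := by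
  subst hf; subst hg; exact hS.realize_iso e h

lemma ext_zero_left (hS : S.IsET) (T : C) :
    S.IsExtriangle (0 : (0 : C) ⟶ T) (𝟙 T) (0 : S.Ext T (0 : C)) :=
  realize_iso' hS (hS.realize_zero (0 : C) T)
    (Iso.mk biprod.snd biprod.inr
      (biprod.hom_ext _ _ ((isZero_zero C).eq_of_tgt _ _) (by simp))
      biprod.inr_snd)
    ((isZero_zero C).eq_of_src _ _) biprod.inr_snd

lemma ext_zero_right (hS : S.IsET) (T : C) :
    S.IsExtriangle (𝟙 T) (0 : T ⟶ (0 : C)) (0 : S.Ext (0 : C) T) :=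
  realize_iso' hS (hS.realize_zero T (0 : C))
    (Iso.mk biprod.fst biprod.inl
      (biprod.hom_ext _ _ (by simp) ((isZero_zero C).eq_of_tgt _ _))
      biprod.inl_fst)
    biprod.inl_fst ((isZero_zero C).eq_of_tgt _ _)

lemma comp_zero' (hS : S.IsET) {A B Q : C} {f : A ⟶ B} {g : B ⟶ Q} {δ : S.Ext Q A}
    (h : S.IsExtriangle f g δ) : f ≫ g = 0 := by
  obtain ⟨b, hb1, hb2⟩ := hS.realize_map h (ext_zero_left hS Q) (0 : A ⟶ (0 : C)) (𝟙 Q)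
    (by rw [push_zero_mor hS, pull_ext_zero])
  rw [Category.comp_id, Category.comp_id] at hb2
  rw [← hb2]
  simpa using hb1

lemma pull_defl (hS : S.IsET) {A B Q : C} {f : A ⟶ B} {g : B ⟶ Q} {δ : S.Ext Q A}
    (h : S.IsExtriangle f g δ) : S.pull g δ = 0 := by
  obtain ⟨a, -, ha⟩ := hS.et3op (ext_zero_left hS B) h (𝟙 B) g (by simp)
  rw [← ha, push_ext_zero]

lemma push_infl (hS : S.IsET) {A B Q : C} {f : A ⟶ B} {g : B ⟶ Q} {δ : S.Ext Q A}
    (h : S.IsExtriangle f g δ) : S.push f δ = 0 := by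
  obtain ⟨c, -, hc⟩ := hS.et3 h (ext_zero_right hS B) f (𝟙 B) (by simp)
  rw [hc, pull_ext_zero]

lemma cofactor (hS : S.IsET) {A B Q : C} {f : A ⟶ B} {g : B ⟶ Q} {δ : S.Ext Q A}
    (h : S.IsExtriangle f g δ) {T : C} (χ : B ⟶ T) (hχ : f ≫ χ = 0) :
    ∃ ρ : Q ⟶ T, g ≫ ρ = χ := by
  obtain ⟨c, hc1, -⟩ := hS.et3 h (ext_zero_left hS T) 0 χ (by simp [hχ])
  exact ⟨c, by simpa using hc1⟩

lemma kfactor (hS : S.IsET) {A B Q : C} {f : A ⟶ B} {g : B ⟶ Q} {δ : S.Ext Q A}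
    (h : S.IsExtriangle f g δ) {T : C} (t : T ⟶ B) (ht : t ≫ g = 0) :
    ∃ u : T ⟶ A, u ≫ f = t := by
  obtain ⟨a, ha1, -⟩ := hS.et3op (ext_zero_right hS T) h t (0 : (0 : C) ⟶ Q) (by simp [ht])
  exact ⟨a, by simpa using ha1.symm⟩

lemma extend (hS : S.IsET) {A B Q : C} {f : A ⟶ B} {g : B ⟶ Q} {δ : S.Ext Q A}
    (h : S.IsExtriangle f g δ) {T : C} (ψ : A ⟶ T) (hψ : S.push ψ δ = 0) :
    ∃ χ : B ⟶ T, f ≫ χ = ψ := by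
  obtain ⟨b, hb1, -⟩ := hS.realize_map h (hS.realize_zero T Q) ψ (𝟙 Q)
    (by rw [hψ, pull_ext_zero])
  refine ⟨b ≫ biprod.fst, ?_⟩
  rw [← Category.assoc, hb1, Category.assoc, biprod.inl_fst, Category.comp_id]

lemma lift' (hS : S.IsET) {A B Q : C} {f : A ⟶ B} {g : B ⟶ Q} {δ : S.Ext Q A}
    (h : S.IsExtriangle f g δ) {T : C} (ρ : T ⟶ Q) (hρ : S.pull ρ δ = 0) :
    ∃ m : T ⟶ B, m ≫ g = ρ := by
  obtain ⟨b, -, hb2⟩ := hS.realize_map (hS.realize_zero A T) h (𝟙 A) ρ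
    (by rw [push_ext_zero, hρ])
  refine ⟨biprod.inr ≫ b, ?_⟩
  rw [Category.assoc, hb2, ← Category.assoc, biprod.inr_snd, Category.id_comp]

lemma ext_surj (hS : S.IsET) {A B Q : C} {f : A ⟶ B} {g : B ⟶ Q} {δ : S.Ext Q A}
    (h : S.IsExtriangle f g δ) {T : C} (ε : S.Ext Q T) (hε : S.pull g ε = 0) :
    ∃ ψ : A ⟶ T, S.push ψ δ = ε := by
  obtain ⟨W, t, w, hw⟩ := hS.realize_exists ε
  obtain ⟨b, hb1, hb2⟩ := hS.realize_map (hS.realize_zero T B) hw (𝟙 T) g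
    (by rw [push_ext_zero, hε])
  obtain ⟨ψ, -, hψ⟩ := hS.et3op h hw (biprod.inr ≫ b) (𝟙 Q)
    (by rw [Category.comp_id, Category.assoc, hb2, ← Category.assoc, biprod.inr_snd,
      Category.id_comp])
  exact ⟨ψ, by rw [hψ, pull_id]⟩

lemma ext_biprod_data (hS : S.IsET) {C₁ C₂ M : C} (i₁ : C₁ ⟶ M) (i₂ : C₂ ⟶ M)
    (p₁ : M ⟶ C₁) (p₂ : M ⟶ C₂) (h11 : i₁ ≫ p₁ = 𝟙 C₁) (h12 : i₁ ≫ p₂ = 0)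
    (h21 : i₂ ≫ p₁ = 0) (h22 : i₂ ≫ p₂ = 𝟙 C₂) (htot : p₁ ≫ i₁ + p₂ ≫ i₂ = 𝟙 M) :
    S.IsExtriangle i₁ p₂ (0 : S.Ext C₂ C₁) :=
  realize_iso' hS (hS.realize_zero C₁ C₂)
    (Iso.mk (biprod.desc i₁ i₂) (biprod.lift p₁ p₂)
      (by
        apply biprod.hom_ext'
        · apply biprod.hom_ext <;> simp [h11, h12]
        · apply biprod.hom_ext <;> simp [h21, h22])
      (by rw [biprod.lift_desc, htot]))
    (biprod.inl_desc _ _) (biprod.lift_snd _ _)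

lemma wic_split (hwic : WeaklyIdemComplete C) {C₁ K : C} (u : C₁ ⟶ K) (r : K ⟶ C₁)
    (hur : u ≫ r = 𝟙 C₁) :
    ∃ (A₂ : C) (k₂ : A₂ ⟶ K) (π : K ⟶ A₂),
      k₂ ≫ π = 𝟙 A₂ ∧ u ≫ π = 0 ∧ k₂ ≫ r = 0 ∧ r ≫ u + π ≫ k₂ = 𝟙 K := by
  haveI : HasKernel r := hwic K C₁ r ⟨⟨⟨u, hur⟩⟩⟩
  have hcond : (𝟙 K - r ≫ u) ≫ r = 0 := by
    rw [Preadditive.sub_comp, Category.id_comp, Category.assoc, hur, Category.comp_id, sub_self]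
  set π : K ⟶ kernel r := kernel.lift r (𝟙 K - r ≫ u) hcond with hπ
  have hπι : π ≫ kernel.ι r = 𝟙 K - r ≫ u := kernel.lift_ι _ _ _
  refine ⟨kernel r, kernel.ι r, π, ?_, ?_, kernel.condition r, ?_⟩
  · rw [← cancel_mono (kernel.ι r), Category.assoc, hπι, Category.id_comp,
      Preadditive.comp_sub, Category.comp_id, ← Category.assoc, kernel.condition,
      zero_comp, sub_zero]
  · rw [← cancel_mono (kernel.ι r), Category.assoc, hπι, Preadditive.comp_sub,
      Category.comp_id, ← Category.assoc, hur, Category.id_comp, sub_self, zero_comp]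
  · rw [hπι]; abel

lemma defl_cancel (hS : S.IsET) (hwic : WeaklyIdemComplete C)
    {C₁ C₂ M X : C} (i₁ : C₁ ⟶ M) (i₂ : C₂ ⟶ M) (p₁ : M ⟶ C₁) (p₂ : M ⟶ C₂)
    (h11 : i₁ ≫ p₁ = 𝟙 C₁) (h12 : i₁ ≫ p₂ = 0) (h21 : i₂ ≫ p₁ = 0)
    (h22 : i₂ ≫ p₂ = 𝟙 C₂) (htot : p₁ ≫ i₁ + p₂ ≫ i₂ = 𝟙 M)
    (g : C₂ ⟶ X) {K : C} {k : K ⟶ M} {ε : S.Ext X K}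
    (hke : S.IsExtriangle k (p₂ ≫ g) ε) :
    ∃ (A₂ : C) (f₂ : A₂ ⟶ C₂) (δ₂ : S.Ext X A₂), S.IsExtriangle f₂ g δ₂ := by
  obtain ⟨u, hu⟩ := kfactor hS hke i₁ (by rw [← Category.assoc, h12, zero_comp])
  have hur : u ≫ k ≫ p₁ = 𝟙 C₁ := by rw [← Category.assoc, hu, h11]
  obtain ⟨A₂, k₂, π, hkπ, huπ, hkr, hKtot⟩ := wic_split hwic u (k ≫ p₁) hur
  have hext0 : S.IsExtriangle u π (0 : S.Ext A₂ C₁) :=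
    ext_biprod_data hS u k₂ (k ≫ p₁) π hur huπ hkr hkπ hKtot
  obtain ⟨E₀, h₀, d, e, δ'', hA, hB, -, -, -, hcomm2⟩ := hS.et4 hext0 hke
  rw [hu] at hA
  have hsplit : S.IsExtriangle i₁ p₂ (0 : S.Ext C₂ C₁) :=
    ext_biprod_data hS i₁ i₂ p₁ p₂ h11 h12 h21 h22 htot
  obtain ⟨c, hc1, hc2⟩ := hS.et3 hsplit hA (𝟙 C₁) (𝟙 M) (by simp)
  rw [Category.id_comp] at hc1
  have hsurj : ∀ {T : C} (ρ : T ⟶ E₀), ∃ σ : T ⟶ C₂, σ ≫ c = ρ := by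
    intro T ρ
    have h1 : S.push i₁ (S.pull ρ δ'') = 0 := by
      rw [← push_pull, push_infl hS hA, pull_ext_zero]
    have hy : S.pull ρ δ'' = 0 := by
      calc S.pull ρ δ'' = S.push (𝟙 C₁) (S.pull ρ δ'') := (push_id _).symm
        _ = S.push p₁ (S.push i₁ (S.pull ρ δ'')) := by rw [← push_comp, h11]
        _ = 0 := by rw [h1, push_ext_zero]
    obtain ⟨m, hm⟩ := lift' hS hA ρ hy
    exact ⟨m ≫ p₂, by rw [Category.assoc, hc1, hm]⟩
  have hinj : ∀ {T : C} (σ : T ⟶ C₂), σ ≫ c = 0 → σ = 0 := by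
    intro T σ hσ
    have hm' : (σ ≫ i₂) ≫ h₀ = 0 := by
      rw [Category.assoc, ← hc1, ← Category.assoc i₂ p₂ c, h22, Category.id_comp, hσ]
    obtain ⟨n, hn⟩ := kfactor hS hA (σ ≫ i₂) hm'
    have h2 := congrArg (· ≫ p₂) hn
    simpa [Category.assoc, h12, h22] using h2.symm
  obtain ⟨σ₀, hσ₀⟩ := hsurj (𝟙 E₀)
  have hcσ : c ≫ σ₀ = 𝟙 C₂ := by
    have h3 := hinj (c ≫ σ₀ - 𝟙 C₂) (by
      rw [Preadditive.sub_comp, Category.assoc, hσ₀, Category.comp_id, Category.id_comp,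
        sub_self])
    exact sub_eq_zero.mp h3
  have hce : c ≫ e = g := by
    have h4 : p₂ ≫ (c ≫ e) = p₂ ≫ g := by
      rw [← Category.assoc, hc1, hcomm2]
    calc c ≫ e = (i₂ ≫ p₂) ≫ (c ≫ e) := by rw [h22, Category.id_comp]
      _ = i₂ ≫ p₂ ≫ g := by rw [Category.assoc, h4]
      _ = (i₂ ≫ p₂) ≫ g := by rw [Category.assoc]
      _ = g := by rw [h22, Category.id_comp]
  refine ⟨A₂, d ≫ σ₀, S.push π ε, ?_⟩
  exact realize_iso' hS hB (Iso.mk σ₀ c hσ₀ hcσ) rfl hce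

lemma infl_iso (hS : S.IsET) {A A' B Q : C} {f : A ⟶ B} {g : B ⟶ Q} {δ : S.Ext Q A}
    {f' : A' ⟶ B} {δ' : S.Ext Q A'} (h : S.IsExtriangle f g δ) (h' : S.IsExtriangle f' g δ')
    (t : A ⟶ A') (ht : t ≫ f' = f) (hδ : S.push t δ = δ') :
    ∃ α : A' ⟶ A, t ≫ α = 𝟙 A ∧ α ≫ t = 𝟙 A' := by
  have hinj : ∀ {T : C} (φ : A' ⟶ T), t ≫ φ = 0 → φ = 0 := by
    intro T φ hφ
    have h1 : S.push φ δ' = 0 := by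
      rw [← hδ, ← push_comp, hφ, push_zero_mor hS]
    obtain ⟨χ, hχ⟩ := extend hS h' φ h1
    have h2 : f ≫ χ = 0 := by rw [← ht, Category.assoc, hχ, hφ]
    obtain ⟨ρ, hρ⟩ := cofactor hS h χ h2
    rw [← hχ, ← hρ, ← Category.assoc, comp_zero' hS h', zero_comp]
  have hsurj : ∀ {T : C} (ψ : A ⟶ T), ∃ φ : A' ⟶ T, t ≫ φ = ψ := by
    intro T ψ
    have hg0 : S.pull g (S.push ψ δ) = 0 := by
      rw [push_pull, pull_defl hS h, push_ext_zero]
    obtain ⟨ψ', hψ'⟩ := ext_surj hS h' (S.push ψ δ) hg0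
    have h0 : S.push (ψ - t ≫ ψ') δ = 0 := by
      rw [push_sub_mor hS, push_comp, hδ, hψ', sub_self]
    obtain ⟨χ, hχ⟩ := extend hS h (ψ - t ≫ ψ') h0
    refine ⟨ψ' + f' ≫ χ, ?_⟩
    rw [Preadditive.comp_add, ← Category.assoc, ht, hχ]
    abel
  obtain ⟨α, hα⟩ := hsurj (𝟙 A)
  have h2 : α ≫ t = 𝟙 A' := by
    have h3 := hinj (α ≫ t - 𝟙 A') (by
      rw [Preadditive.comp_sub, Category.comp_id, ← Category.assoc, hα, Category.id_comp,
        sub_self])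
    exact sub_eq_zero.mp h3
  exact ⟨α, hα, h2⟩

end Aux

theorem stmt2 (S : PreExt C) (hS : S.IsET) (hwic : WeaklyIdemComplete C)
    {A B₁ B₂ X₁ X₂ : C} (f : A ⟶ B₁ ⊞ B₂) (g₁ : B₁ ⟶ X₁) (g₂ : B₂ ⟶ X₂)
    (δ : S.Ext (X₁ ⊞ X₂) A) (h : S.IsExtriangle f (biprod.map g₁ g₂) δ) :
    ∃ (A₁ A₂ : C) (f₁ : A₁ ⟶ B₁) (f₂ : A₂ ⟶ B₂) (δ₁ : S.Ext X₁ A₁) (δ₂ : S.Ext X₂ A₂),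
      S.IsExtriangle f₁ g₁ δ₁ ∧ S.IsExtriangle f₂ g₂ δ₂ ∧
      S.TriIso f (biprod.map g₁ g₂) δ
        (biprod.map f₁ f₂) (biprod.map g₁ g₂) (S.sumExt δ₁ δ₂) := by
  have hswap : S.IsExtriangle (biprod.inr : X₂ ⟶ X₁ ⊞ X₂) biprod.fst (0 : S.Ext X₁ X₂) :=
    ext_biprod_data hS biprod.inr biprod.inl biprod.snd biprod.fst
      biprod.inr_snd biprod.inr_fst biprod.inl_snd biprod.inl_fst
      (by rw [add_comm]; exact biprod.total)
  obtain ⟨E₂, h₂, -, -, δ₂'', hx2, -, -, -, -, -⟩ := hS.et4op (hS.realize_zero X₁ X₂) h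
  rw [biprod.map_snd] at hx2
  obtain ⟨A₂, f₂, δ₂, hδ₂⟩ := defl_cancel hS hwic biprod.inl biprod.inr biprod.fst biprod.snd
    biprod.inl_fst biprod.inl_snd biprod.inr_fst biprod.inr_snd biprod.total g₂ hx2
  obtain ⟨E₁, h₁, -, -, δ₁'', hx1, -, -, -, -, -⟩ := hS.et4op hswap h
  rw [biprod.map_fst] at hx1
  obtain ⟨A₁, f₁, δ₁, hδ₁⟩ := defl_cancel hS hwic biprod.inr biprod.inl biprod.snd biprod.fst
    biprod.inr_snd biprod.inr_fst biprod.inl_snd biprod.inl_fst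
    (by rw [add_comm]; exact biprod.total) g₁ hx1
  have hsum := hS.realize_sum hδ₁ hδ₂
  obtain ⟨t, ht, hpt⟩ := hS.et3op h hsum (𝟙 _) (𝟙 _) (by simp)
  rw [Category.comp_id] at ht
  rw [pull_id] at hpt
  obtain ⟨α, hα1, hα2⟩ := infl_iso hS h hsum t ht.symm hpt
  refine ⟨A₁, A₂, f₁, f₂, δ₁, δ₂, hδ₁, hδ₂, Iso.mk t α hα1 hα2, Iso.refl _, Iso.refl _,
    ?_, ?_, ?_⟩
  · show f ≫ 𝟙 _ = t ≫ biprod.map f₁ f₂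
    rw [Category.comp_id]; exact ht
  · simp
  · show S.push t δ = S.pull (𝟙 _) (S.sumExt δ₁ δ₂)
    rw [pull_id]; exact hpt


end Statements

end ExtriPaper
end

section
/- Let (A, E, s) be an extriangulated category. If (A, E, s) has an (E, s)-simple object S, then the zero object of A is (E, s)-simple-like. -/
/-!
Common axiomatic framework: extriangulated categories in the sense of Nakaoka–Palu,
formalised as a biadditive functor `E` together with a realisation predicate
`IsExtriangle` subject to the axioms (ET1)–(ET4), (ET3)ᵒᵖ, (ET4)ᵒᵖ.
-/

open CategoryTheory CategoryTheory.Limits ZeroObject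

attribute [local instance] CategoryTheory.Limits.hasBinaryBiproducts_of_finite_biproducts

universe v u

namespace ExtriPaper

section Statements

variable {C : Type u} [Category.{v} C] [Preadditive C] [HasZeroObject C] [HasFiniteBiproducts C]

theorem stmt4 (S : PreExt C) (hS : S.IsET) (hsimple : ∃ M : C, S.SSimple M) :
    S.ZeroSimpleLike := by
  obtain ⟨M, hM⟩ := hsimple
  intro A Z X f g δ hZ hext
  have h0 := hS.realize_zero M 0
  have hsum := hS.realize_sum hext h0
  have hi1 : ((biprod.snd ≫ biprod.fst : Z ⊞ (M ⊞ (0 : C)) ⟶ M)) ≫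
      (biprod.inl ≫ biprod.inr : M ⟶ Z ⊞ (M ⊞ (0 : C))) = 𝟙 _ := by
    apply biprod.hom_ext'
    · exact hZ.eq_of_src _ _
    · apply biprod.hom_ext'
      · simp
      · exact (isZero_zero C).eq_of_src _ _
  have hi2 : ((biprod.inl ≫ biprod.inr : M ⟶ Z ⊞ (M ⊞ (0 : C)))) ≫
      (biprod.snd ≫ biprod.fst) = 𝟙 M := by simp
  set e : Z ⊞ (M ⊞ (0 : C)) ≅ M := ⟨biprod.snd ≫ biprod.fst, biprod.inl ≫ biprod.inr, hi1, hi2⟩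
    with he
  have het := hS.realize_iso e hsum
  set a : A ⊞ M ⟶ M := biprod.map f biprod.inl ≫ e.hom with hadef
  have hra : (biprod.inr : M ⟶ A ⊞ M) ≫ a = 𝟙 M := by
    simp [hadef, he]
  have hla : (biprod.inl : A ⟶ A ⊞ M) ≫ a = 0 := by
    simp [hadef, he]
  rcases hM.2 _ _ _ _ _ het with ha | ha
  · exfalso
    apply hM.1
    rw [IsZero.iff_id_eq_zero, ← hra, ha, comp_zero]
  · haveI := ha
    have h2 : (biprod.inl : A ⟶ A ⊞ M) = 0 :=
      (cancel_mono a).mp (by rw [hla, zero_comp])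
    rw [IsZero.iff_id_eq_zero]
    calc 𝟙 A = biprod.inl ≫ (biprod.fst : A ⊞ M ⟶ A) := by simp
    _ = 0 := by rw [h2, zero_comp]

end Statements

end ExtriPaper
end
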